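/- Let f : ℝ⁶ × ℝ² → ℝ⁶ be the slider dynamics f((x₁,…,x₆),(u₁,u₂)) = (x₂, u₁ cos(x₅), x₄, u₁ sin(x₅), x₆, u₂). Let ε ≠ 0 and let B ⊂ ℝ⁶ be a ball centered at 0 ∈ ℝ⁶ of radius strictly less than π/2. Then the point (0, 0, 0, ε, 0, 0) ∈ ℝ⁶ does not belong to the image f(B × ℝ²). In particular, f(𝒩) is not a neighborhood of 0 ∈ ℝ⁶ for 𝒩 = B × ℝ², so the slider does not satisfy the Brockett necessary condition for stabilizability by continuous state feedback. -/

import Mathlib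

open Set Filter

/-- The slider dynamics
`f((x₁,…,x₆),(u₁,u₂)) = (x₂, u₁cos x₅, x₄, u₁sin x₅, x₆, u₂)`. -/
noncomputable def fSli (p : EuclideanSpace ℝ (Fin 6) × (ℝ × ℝ)) :
    EuclideanSpace ℝ (Fin 6) :=
  WithLp.toLp 2 ![p.1 1, p.2.1 * Real.cos (p.1 4), p.1 3, p.2.1 * Real.sin (p.1 4), p.1 5, p.2.2]

lemma abs_coord_le_norm (x : EuclideanSpace ℝ (Fin 6)) (i : Fin 6) : |x i| ≤ ‖x‖ := by
  rw [EuclideanSpace.norm_eq]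
  have h1 : |x i| = Real.sqrt (‖x i‖ ^ 2) := by
    rw [Real.sqrt_sq_eq_abs, abs_norm, Real.norm_eq_abs]
  rw [h1]
  apply Real.sqrt_le_sqrt
  exact Finset.single_le_sum (fun j _ => sq_nonneg ‖x j‖) (Finset.mem_univ i)

lemma key (δ ρ : ℝ) (hδ : δ ≠ 0) (hρ : ρ < Real.pi / 2) :
    (WithLp.toLp 2 ![0, 0, 0, δ, 0, 0] : EuclideanSpace ℝ (Fin 6)) ∉
      fSli '' (Metric.ball (0 : EuclideanSpace ℝ (Fin 6)) ρ ×ˢ (Set.univ : Set (ℝ × ℝ))) := by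
  rintro ⟨⟨x, u⟩, ⟨hx, -⟩, heq⟩
  have h1 := congrArg (fun v => v 1) heq
  have h3 := congrArg (fun v => v 3) heq
  simp [fSli] at h1 h3
  have hxn : ‖x‖ < Real.pi / 2 := by
    have := Metric.mem_ball.mp hx
    rw [dist_zero_right] at this
    linarith
  have hx4 : |x 4| < Real.pi / 2 := lt_of_le_of_lt (abs_coord_le_norm x 4) hxn
  have hcos : Real.cos (x 4) > 0 := by
    apply Real.cos_pos_of_mem_Ioo
    constructor <;> [linarith [abs_lt.mp hx4]; linarith [abs_lt.mp hx4]]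
  have hu : u.1 ≠ 0 := by
    intro h; rw [h] at h3; simp at h3; exact hδ h3.symm
  rcases h1 with h | h
  · exact hu h
  · exact absurd h (ne_of_gt hcos)

lemma single_eq (δ : ℝ) :
    (EuclideanSpace.single (3 : Fin 6) δ : EuclideanSpace ℝ (Fin 6)) = WithLp.toLp 2 ![0, 0, 0, δ, 0, 0] := by
  ext i
  fin_cases i <;> simp [EuclideanSpace.single_apply] <;> rfl

/-- The slider does not satisfy the Brockett condition: for any ball `B` of
radius `< π/2` around the origin, `(0,0,0,ε,0,0) ∉ f(B × ℝ²)` for every `ε ≠ 0`,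
hence `f(B × ℝ²)` is not a neighborhood of `0`. -/
theorem stmt17 (ε ρ : ℝ) (hε : ε ≠ 0) (hρ : ρ < Real.pi / 2) :
    (WithLp.toLp 2 ![0, 0, 0, ε, 0, 0] : EuclideanSpace ℝ (Fin 6)) ∉
      fSli '' (Metric.ball (0 : EuclideanSpace ℝ (Fin 6)) ρ ×ˢ (Set.univ : Set (ℝ × ℝ))) ∧
    fSli '' (Metric.ball (0 : EuclideanSpace ℝ (Fin 6)) ρ ×ˢ (Set.univ : Set (ℝ × ℝ))) ∉
      nhds (0 : EuclideanSpace ℝ (Fin 6)) := by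
  refine ⟨key ε ρ hε hρ, fun h => ?_⟩
  obtain ⟨r, hr, hball⟩ := Metric.mem_nhds_iff.mp h
  set δ := r / 2 with hδdef
  have hδ : δ ≠ 0 := by positivity
  have hmem : (WithLp.toLp 2 ![0, 0, 0, δ, 0, 0] : EuclideanSpace ℝ (Fin 6)) ∈
      fSli '' (Metric.ball (0 : EuclideanSpace ℝ (Fin 6)) ρ ×ˢ (Set.univ : Set (ℝ × ℝ))) := by
    apply hball
    rw [← single_eq, Metric.mem_ball, dist_zero_right, EuclideanSpace.norm_single]
    rw [Real.norm_eq_abs, abs_of_pos (by positivity)]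
    linarith
  exact key δ ρ hδ hρ hmem
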